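/- For integers N ≥ 2 and H with 1 ≤ H ≤ N, assuming (a) Gallagher-type identity ∫₀¹|S₀(α,x)|²K(α,H)dα = (1/H)∫_{-∞}^∞ |∑_{t<n<t+H, n≤x} Λ₀(n)|² dt and (b) the RH bounds I(x) ≪ x², J(x,h) ≪ hx(log(2x/h))², together with averaging over x ∈ [N,2N], one has (1/N)∫_N^{2N} ∫₀¹ |S₀(α,x)|² K(α,N) dα dx ≤ C N for an absolute constant C. -/

import Mathlib

open Finset intervalIntegral MeasureTheory

noncomputable def e (u : ℝ) : ℂ := Complex.exp (2 * Real.pi * Complex.I * u)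

/-- `S₀(α, x) = ∑_{n ≤ x} (Λ(n) - 1) e(nα)`. -/
noncomputable def S0 (α : ℝ) (x : ℝ) : ℂ :=
  ∑ n ∈ Finset.Icc 1 ⌊x⌋₊, ((ArithmeticFunction.vonMangoldt n - 1 : ℝ) : ℂ) * e (n * α)

/-- The (real-valued) Fejér kernel `K(α, H) = ∑_{|n| ≤ H} (1 - |n|/H) e(nα)`. -/
noncomputable def K (α : ℝ) (H : ℕ) : ℝ :=
  (∑ n ∈ Finset.Icc (-(H : ℤ)) (H : ℤ), ((1 - (|n| : ℝ) / H : ℝ) : ℂ) * e (n * α)).re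

/-- `∑_{t < n < t + H, n ≤ x} Λ₀(n)`. -/
noncomputable def W (x : ℝ) (H : ℕ) (t : ℝ) : ℝ :=
  ∑ n ∈ Finset.Icc 1 ⌊x⌋₊,
    if t < (n : ℝ) ∧ (n : ℝ) < t + H then ArithmeticFunction.vonMangoldt n - 1 else 0

/-- Chebyshev `ψ(t) = ∑_{m ≤ t} Λ(m)`. -/
noncomputable def psi (t : ℝ) : ℝ :=
  ∑ m ∈ Finset.Icc 1 ⌊t⌋₊, ArithmeticFunction.vonMangoldt m

lemma psi_nonneg (t : ℝ) : 0 ≤ psi t :=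
  Finset.sum_nonneg fun _ _ => ArithmeticFunction.vonMangoldt_nonneg

lemma psi_mono : Monotone psi := fun s t hst =>
  Finset.sum_le_sum_of_subset_of_nonneg
    (Finset.Icc_subset_Icc le_rfl (Nat.floor_le_floor hst))
    (fun i _ _ => ArithmeticFunction.vonMangoldt_nonneg)

lemma psi_natCast (m : ℕ) : psi m = ∑ n ∈ Finset.Icc 1 m, ArithmeticFunction.vonMangoldt n := by
  unfold psi; rw [Nat.floor_natCast]

lemma psi_eq_zero {t : ℝ} (h : t < 1) : psi t = 0 := by
  unfold psi
  rw [Nat.floor_eq_zero.mpr h]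
  simp

lemma q_int (a b : ℝ) : IntervalIntegrable (fun t => (psi t - t) ^ 2) volume a b := by
  have h1 : Monotone (fun t => psi t * psi t) := fun s t h =>
    mul_le_mul (psi_mono h) (psi_mono h) (psi_nonneg s) (psi_nonneg t)
  have h2 : Monotone (fun t : ℝ => t * psi t) := by
    intro s t h
    by_cases hs : s < 1
    · have : psi s = 0 := psi_eq_zero hs
      simp only [this, mul_zero]
      by_cases ht : t < 1
      · simp [psi_eq_zero ht]
      · exact mul_nonneg (by linarith) (psi_nonneg t)
    · push_neg at hs
      exact mul_le_mul h (psi_mono h) (psi_nonneg s) (by linarith [h, hs])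
  have h : (fun t : ℝ => (psi t - t) ^ 2)
      = fun t => (psi t * psi t + t ^ 2) - 2 * (t * psi t) := by
    funext t; ring
  rw [h]
  exact ((h1.intervalIntegrable.add ((continuous_id.pow 2).intervalIntegrable a b)).sub
    (h2.intervalIntegrable.const_mul 2))

noncomputable def Epsi (n : ℕ) : ℝ := psi n - n

lemma Epsi_zero : Epsi 0 = 0 := by simp [Epsi, psi_eq_zero]

noncomputable def Af (X H : ℕ) (k : ℤ) : ℝ :=
  Epsi (min X (k + H).toNat) - Epsi k.toNat

lemma sum_Ioc_eq (u b : ℕ) (h : u ≤ b) :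
    ∑ n ∈ Finset.Ioc u b, ((ArithmeticFunction.vonMangoldt n : ℝ) - 1) = Epsi b - Epsi u := by
  have icc : ∀ m : ℕ, Finset.Icc 1 m = Finset.Ioc 0 m := by
    intro m; ext a; simp [Finset.mem_Icc, Finset.mem_Ioc, Nat.lt_iff_add_one_le]
  have key : ∀ m : ℕ, ∑ n ∈ Finset.Ioc 0 m, ((ArithmeticFunction.vonMangoldt n : ℝ) - 1)
      = Epsi m := by
    intro m
    rw [Finset.sum_sub_distrib, Finset.sum_const, Nat.card_Ioc, Epsi, psi_natCast, icc]
    simp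
  have hc := Finset.sum_Ioc_consecutive
    (f := fun n => ((ArithmeticFunction.vonMangoldt n : ℝ) - 1)) (Nat.zero_le u) h
  linarith [key u, key b, hc]

lemma W_eq (x t : ℝ) (H : ℕ) (ht : (⌊t⌋ : ℝ) < t) :
    W x H t = if 1 - (H : ℤ) ≤ ⌊t⌋ ∧ ⌊t⌋ ≤ (⌊x⌋₊ : ℤ) - 1 then Af ⌊x⌋₊ H ⌊t⌋ else 0 := by
  set X := ⌊x⌋₊ with hX
  set k := ⌊t⌋ with hk
  have hcond : ∀ n : ℕ, ((t < (n:ℝ) ∧ (n:ℝ) < t + H) ↔ (k < (n:ℤ) ∧ (n:ℤ) ≤ k + H)) := by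
    intro n
    constructor
    · rintro ⟨h1, h2⟩
      refine ⟨Int.floor_lt.mpr (by exact_mod_cast h1), ?_⟩
      have h3 : (((n:ℤ) - H : ℤ) : ℝ) ≤ t := by push_cast; linarith
      have := Int.le_floor.mpr h3
      omega
    · rintro ⟨h1, h2⟩
      constructor
      · have : ((k + 1 : ℤ) : ℝ) ≤ (n : ℝ) := by exact_mod_cast (by omega : (k+1 : ℤ) ≤ (n:ℤ))
        have h4 := Int.lt_floor_add_one t
        push_cast at this h4 ⊢
        linarith
      · have : ((n : ℤ) : ℝ) ≤ ((k + H : ℤ) : ℝ) := by exact_mod_cast h2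
        push_cast at this
        linarith
  have hW : W x H t = ∑ n ∈ (Finset.Icc 1 X).filter (fun n : ℕ => k < (n:ℤ) ∧ (n:ℤ) ≤ k + H),
      ((ArithmeticFunction.vonMangoldt n : ℝ) - 1) := by
    rw [W, Finset.sum_filter]
    exact Finset.sum_congr rfl fun n _ => if_congr (hcond n) rfl rfl
  rw [hW]
  by_cases hr : 1 - (H : ℤ) ≤ k ∧ k ≤ (X : ℤ) - 1
  · rw [if_pos hr]
    have hfil : (Finset.Icc 1 X).filter (fun n : ℕ => k < (n:ℤ) ∧ (n:ℤ) ≤ k + H)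
        = Finset.Ioc k.toNat (min X (k + H).toNat) := by
      ext n
      simp only [Finset.mem_filter, Finset.mem_Icc, Finset.mem_Ioc, lt_min_iff, le_min_iff]
      omega
    rw [hfil, sum_Ioc_eq _ _ (by omega)]
    rfl
  · rw [if_neg hr]
    have hfil : (Finset.Icc 1 X).filter (fun n : ℕ => k < (n:ℤ) ∧ (n:ℤ) ≤ k + H) = ∅ := by
      ext n
      simp only [Finset.mem_filter, Finset.mem_Icc, Finset.notMem_empty, iff_false, not_and]
      omega
    rw [hfil, Finset.sum_empty]

lemma sum_Ioc_zsplit (f : ℤ → ℝ) {a b c : ℤ} (hab : a ≤ b) (hbc : b ≤ c) :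
    ∑ k ∈ Finset.Ioc a c, f k = ∑ k ∈ Finset.Ioc a b, f k + ∑ k ∈ Finset.Ioc b c, f k := by
  rw [← Finset.Ioc_union_Ioc_eq_Ioc hab hbc, Finset.sum_union]
  refine Finset.disjoint_left.mpr fun k hk1 hk2 => ?_
  simp only [Finset.mem_Ioc] at hk1 hk2
  omega

lemma S_le (X H : ℕ) (hH : 1 ≤ H) (hHX : H ≤ X) :
    ∑ k ∈ Finset.Ioc (-(H:ℤ)) ((X:ℤ) - 1), (Af X H k) ^ 2
      ≤ 4 * ∑ m ∈ Finset.Icc 1 (X - 1), (Epsi m) ^ 2 + 2 * H * (Epsi X) ^ 2 := by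
  have hX1 : 1 ≤ X := le_trans hH hHX
  have step1 : ∑ k ∈ Finset.Ioc (-(H:ℤ)) ((X:ℤ) - 1), (Af X H k) ^ 2
      ≤ ∑ k ∈ Finset.Ioc (-(H:ℤ)) ((X:ℤ) - 1),
        (2 * (Epsi (min X (k + H).toNat)) ^ 2 + 2 * (Epsi k.toNat) ^ 2) := by
    refine Finset.sum_le_sum fun k _ => ?_
    unfold Af
    nlinarith [sq_nonneg (Epsi (min X (k + H).toNat) + Epsi k.toNat)]
  have hu : ∑ k ∈ Finset.Ioc (-(H:ℤ)) ((X:ℤ) - 1), (Epsi k.toNat) ^ 2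
      ≤ ∑ m ∈ Finset.Icc 1 (X - 1), (Epsi m) ^ 2 := by
    rw [sum_Ioc_zsplit _ (by omega : -(H:ℤ) ≤ 0) (by omega : (0:ℤ) ≤ (X:ℤ) - 1)]
    have h0 : ∑ k ∈ Finset.Ioc (-(H:ℤ)) 0, (Epsi k.toNat) ^ 2 = 0 := by
      refine Finset.sum_eq_zero fun k hk => ?_
      simp only [Finset.mem_Ioc] at hk
      rw [(by omega : k.toNat = 0), Epsi_zero]
      ring
    rw [h0, zero_add]
    refine le_of_eq (Finset.sum_nbij' (fun k : ℤ => k.toNat) (fun m : ℕ => (m : ℤ))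
      ?_ ?_ ?_ ?_ ?_)
    · intro a haa; simp only [Finset.mem_Ioc] at haa; simp only [Finset.mem_Icc]; omega
    · intro a haa; simp only [Finset.mem_Icc] at haa; simp only [Finset.mem_Ioc]; omega
    · intro a haa; simp only [Finset.mem_Ioc] at haa; omega
    · intro a haa; omega
    · intro a haa; rfl
  have hb : ∑ k ∈ Finset.Ioc (-(H:ℤ)) ((X:ℤ) - 1), (Epsi (min X (k + H).toNat)) ^ 2
      ≤ ∑ m ∈ Finset.Icc 1 (X - 1), (Epsi m) ^ 2 + H * (Epsi X) ^ 2 := by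
    rw [sum_Ioc_zsplit _ (by omega : -(H:ℤ) ≤ (X:ℤ) - 1 - H)
      (by omega : (X:ℤ) - 1 - H ≤ (X:ℤ) - 1)]
    have h1 : ∑ k ∈ Finset.Ioc (-(H:ℤ)) ((X:ℤ) - 1 - H), (Epsi (min X (k + H).toNat)) ^ 2
        = ∑ m ∈ Finset.Icc 1 (X - 1), (Epsi m) ^ 2 := by
      refine Finset.sum_nbij' (fun k : ℤ => (k + H).toNat) (fun m : ℕ => (m : ℤ) - H)
        ?_ ?_ ?_ ?_ ?_
      · intro a haa; simp only [Finset.mem_Ioc] at haa; simp only [Finset.mem_Icc]; omega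
      · intro a haa; simp only [Finset.mem_Icc] at haa; simp only [Finset.mem_Ioc]; omega
      · intro a haa; simp only [Finset.mem_Ioc] at haa; omega
      · intro a haa; simp only [Finset.mem_Icc] at haa; omega
      · intro a haa
        simp only [Finset.mem_Ioc] at haa
        rw [min_eq_right (by omega : (a + (H:ℤ)).toNat ≤ X)]
    have h2 : ∑ k ∈ Finset.Ioc ((X:ℤ) - 1 - H) ((X:ℤ) - 1), (Epsi (min X (k + H).toNat)) ^ 2
        = H * (Epsi X) ^ 2 := by
      have : ∀ k ∈ Finset.Ioc ((X:ℤ) - 1 - H) ((X:ℤ) - 1),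
          (Epsi (min X (k + H).toNat)) ^ 2 = (Epsi X) ^ 2 := by
        intro k hk
        simp only [Finset.mem_Ioc] at hk
        rw [min_eq_left (by omega : X ≤ (k + (H:ℤ)).toNat)]
      rw [Finset.sum_congr rfl this, Finset.sum_const, Int.card_Ioc]
      have hcard : ((X:ℤ) - 1 - ((X:ℤ) - 1 - H)).toNat = H := by omega
      rw [hcard]
      simp only [nsmul_eq_mul]
    rw [h1, h2]
  calc _ ≤ _ := step1
    _ = 2 * (∑ k ∈ Finset.Ioc (-(H:ℤ)) ((X:ℤ) - 1), (Epsi (min X (k + H).toNat)) ^ 2)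
        + 2 * (∑ k ∈ Finset.Ioc (-(H:ℤ)) ((X:ℤ) - 1), (Epsi k.toNat) ^ 2) := by
      rw [Finset.sum_add_distrib, Finset.mul_sum, Finset.mul_sum]
      
    _ ≤ 2 * (∑ m ∈ Finset.Icc 1 (X - 1), (Epsi m) ^ 2 + H * (Epsi X) ^ 2)
        + 2 * (∑ m ∈ Finset.Icc 1 (X - 1), (Epsi m) ^ 2) := by
      gcongr
    _ = 4 * ∑ m ∈ Finset.Icc 1 (X - 1), (Epsi m) ^ 2 + 2 * H * (Epsi X) ^ 2 := by ring

lemma psi_floor_eq {m : ℕ} {t : ℝ} (h1 : (m : ℝ) ≤ t) (h2 : t < m + 1) : psi t = psi m := by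
  unfold psi
  rw [Nat.floor_natCast, Nat.floor_eq_iff (le_trans (Nat.cast_nonneg m) h1) |>.mpr ⟨h1, h2⟩]

lemma two_int (a b : ℝ) :
    IntervalIntegrable (fun t => 2 * (psi t - t) ^ 2 + 2) volume a b :=
  ((q_int a b).const_mul 2).add (intervalIntegrable_const)

lemma Epsi_sq_le (m : ℕ) :
    (Epsi m) ^ 2 ≤ ∫ t in (m:ℝ)..(m+1), (2 * (psi t - t) ^ 2 + 2) := by
  have h1 : (Epsi m) ^ 2 = ∫ t in (m:ℝ)..(m+1), (Epsi m) ^ 2 := by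
    rw [intervalIntegral.integral_const]
    simp
  rw [h1]
  refine intervalIntegral.integral_mono_ae_restrict (by linarith)
    intervalIntegrable_const (two_int _ _) ?_
  have hae : ∀ᵐ t : ℝ ∂(volume.restrict (Set.Icc (m:ℝ) (m+1))), t ≠ (m:ℝ) + 1 := by
    refine ae_restrict_of_ae ?_
    refine (MeasureTheory.ae_iff).mpr ?_
    simp [Real.volume_singleton]
  have hmem : ∀ᵐ t : ℝ ∂(volume.restrict (Set.Icc (m:ℝ) (m+1))),
      t ∈ Set.Icc (m:ℝ) (m+1) := ae_restrict_mem measurableSet_Icc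
  filter_upwards [hae, hmem] with t hne hmem'
  obtain ⟨hl, hr⟩ := hmem'
  have hlt : t < (m:ℝ) + 1 := lt_of_le_of_ne hr hne
  have hps : psi t = psi m := psi_floor_eq hl hlt
  have : Epsi m = (psi t - t) + (t - m) := by rw [Epsi, ← hps]; ring
  rw [this]
  nlinarith [sq_nonneg ((psi t - t) - (t - m)), sq_nonneg (t - (m:ℝ)), sq_nonneg (t - (m:ℝ) - 1)]

lemma sum_Epsi_sq_le {C₂ : ℝ}
    (hI : ∀ x : ℝ, 1 ≤ x → (∫ t in (0:ℝ)..x, (psi t - t) ^ 2) ≤ C₂ * x ^ 2)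
    (X : ℕ) (hX : 1 ≤ X) :
    ∑ m ∈ Finset.Icc 1 (X - 1), (Epsi m) ^ 2 ≤ 2 * C₂ * X ^ 2 + 2 * X := by
  have step1 : ∑ m ∈ Finset.Icc 1 (X - 1), (Epsi m) ^ 2
      ≤ ∑ m ∈ Finset.Icc 1 (X - 1), ∫ t in (m:ℝ)..(m+1), (2 * (psi t - t) ^ 2 + 2) :=
    Finset.sum_le_sum fun m _ => Epsi_sq_le m
  have step2 : ∑ m ∈ Finset.Icc 1 (X - 1), (∫ t in (m:ℝ)..(m+1), (2 * (psi t - t) ^ 2 + 2))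
      = ∫ t in (1:ℝ)..(X:ℝ), (2 * (psi t - t) ^ 2 + 2) := by
    have hadj := intervalIntegral.sum_integral_adjacent_intervals
      (a := fun i : ℕ => (1 : ℝ) + i) (n := X - 1)
      (f := fun t => 2 * (psi t - t) ^ 2 + 2) (fun i _ => two_int _ _)
    have e1 : ((1:ℝ) + 0) = 1 := by norm_num
    have e2 : ((1:ℝ) + (X - 1 : ℕ)) = (X : ℝ) := by
      have : ((X - 1 : ℕ) : ℝ) = (X : ℝ) - 1 := by
        push_cast [Nat.cast_sub hX]; ring
      rw [this]; ring
    have hicc : Finset.Icc 1 (X - 1) = Finset.Ico 1 X := by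
      ext a; simp only [Finset.mem_Icc, Finset.mem_Ico]; omega
    rw [hicc, Finset.sum_Ico_eq_sum_range]
    calc ∑ i ∈ Finset.range (X - 1), ∫ t in ((1 + i : ℕ) : ℝ)..((1 + i : ℕ) : ℝ) + 1,
          (2 * (psi t - t) ^ 2 + 2)
        = ∑ i ∈ Finset.range (X - 1), ∫ t in (1 + (i:ℝ))..(1 + ((i:ℕ) + 1 : ℝ)),
          (2 * (psi t - t) ^ 2 + 2) := by
          refine Finset.sum_congr rfl fun i _ => ?_
          congr 1 <;> push_cast <;> ring
      _ = ∫ t in (1 + ((0:ℕ):ℝ))..(1 + ((X - 1 : ℕ):ℝ)), (2 * (psi t - t) ^ 2 + 2) := by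
          rw [← hadj]
          refine Finset.sum_congr rfl fun i _ => ?_
          congr 1
          push_cast
          ring
      _ = ∫ t in (1:ℝ)..(X:ℝ), (2 * (psi t - t) ^ 2 + 2) := by
          rw [e2]
          norm_num
  have step3 : ∫ t in (1:ℝ)..(X:ℝ), (2 * (psi t - t) ^ 2 + 2)
      = 2 * (∫ t in (1:ℝ)..(X:ℝ), (psi t - t) ^ 2) + 2 * ((X:ℝ) - 1) := by
    rw [intervalIntegral.integral_add ((q_int _ _).const_mul 2) intervalIntegrable_const,
      intervalIntegral.integral_const_mul, intervalIntegral.integral_const]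
    simp [smul_eq_mul]; ring
  have hX1 : (1:ℝ) ≤ (X:ℝ) := by exact_mod_cast hX
  have step4 : (∫ t in (1:ℝ)..(X:ℝ), (psi t - t) ^ 2) ≤ ∫ t in (0:ℝ)..(X:ℝ), (psi t - t) ^ 2 := by
    have hsplit := intervalIntegral.integral_add_adjacent_intervals
      (q_int 0 1) (q_int 1 (X:ℝ))
    have hpos : 0 ≤ ∫ t in (0:ℝ)..(1:ℝ), (psi t - t) ^ 2 :=
      intervalIntegral.integral_nonneg (by norm_num) (fun u _ => sq_nonneg _)
    linarith
  have step5 := hI (X:ℝ) hX1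
  calc ∑ m ∈ Finset.Icc 1 (X - 1), (Epsi m) ^ 2
      ≤ ∫ t in (1:ℝ)..(X:ℝ), (2 * (psi t - t) ^ 2 + 2) := step2 ▸ step1
    _ = 2 * (∫ t in (1:ℝ)..(X:ℝ), (psi t - t) ^ 2) + 2 * ((X:ℝ) - 1) := step3
    _ ≤ 2 * (C₂ * X ^ 2) + 2 * ((X:ℝ) - 1) := by linarith
    _ ≤ 2 * C₂ * X ^ 2 + 2 * X := by linarith

lemma intW_le (x : ℝ) (H : ℕ) :
    (∫ t : ℝ, (W x H t) ^ 2)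
      ≤ ∑ k ∈ Finset.Ioc (-(H:ℤ)) ((⌊x⌋₊:ℤ) - 1), (Af ⌊x⌋₊ H k) ^ 2 := by
  set X := ⌊x⌋₊ with hX
  set s : Finset ℤ := Finset.Ioc (-(H:ℤ)) ((X:ℤ) - 1) with hs
  set F : ℝ → ℝ := fun t =>
    ∑ k ∈ s, Set.indicator (Set.Ico (k:ℝ) ((k:ℝ) + 1)) (fun _ => (Af X H k) ^ 2) t with hF
  have hterm : ∀ k ∈ s, Integrable
      (Set.indicator (Set.Ico (k:ℝ) ((k:ℝ) + 1)) (fun _ => (Af X H k) ^ 2)) volume := by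
    intro k _
    rw [integrable_indicator_iff measurableSet_Ico]
    exact (integrableOn_const_iff).mpr (Or.inr measure_Ico_lt_top)
  have hFint : Integrable F volume := integrable_finset_sum s hterm
  have hFval : (∫ t : ℝ, F t) = ∑ k ∈ s, (Af X H k) ^ 2 := by
    rw [hF, integral_finset_sum s hterm]
    refine Finset.sum_congr rfl fun k _ => ?_
    rw [MeasureTheory.integral_indicator_const _ measurableSet_Ico]
    simp [Real.volume_Ico]
  have hle : ∀ᵐ t : ℝ, (W x H t) ^ 2 ≤ F t := by
    have hz : ∀ᵐ t : ℝ, t ∉ Set.range (fun z : ℤ => (z:ℝ)) :=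
      measure_eq_zero_iff_ae_notMem.mp ((Set.countable_range _).measure_zero _)
    filter_upwards [hz] with t ht
    have hfl : (⌊t⌋ : ℝ) < t :=
      lt_of_le_of_ne (Int.floor_le t) (fun h => ht ⟨⌊t⌋, h⟩)
    rw [W_eq x t H hfl]
    have hmem : ∀ k : ℤ, t ∈ Set.Ico (k:ℝ) ((k:ℝ) + 1) ↔ k = ⌊t⌋ := by
      intro k
      rw [Set.mem_Ico, eq_comm]
      exact (Int.floor_eq_iff).symm
    have hFt : F t = if ⌊t⌋ ∈ s then (Af X H ⌊t⌋) ^ 2 else 0 := by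
      show (∑ k ∈ s, Set.indicator (Set.Ico (k:ℝ) ((k:ℝ) + 1)) (fun _ => (Af X H k) ^ 2) t) = _
      have : ∀ k ∈ s, Set.indicator (Set.Ico (k:ℝ) ((k:ℝ) + 1)) (fun _ => (Af X H k) ^ 2) t
          = if k = ⌊t⌋ then (Af X H k) ^ 2 else 0 := by
        intro k _
        rw [Set.indicator_apply]
        exact if_congr (hmem k) rfl rfl
      rw [Finset.sum_congr rfl this, Finset.sum_ite_eq' s ⌊t⌋ (fun k => (Af X H k) ^ 2)]
    rw [hFt]
    have hiff : (1 - (H : ℤ) ≤ ⌊t⌋ ∧ ⌊t⌋ ≤ (X : ℤ) - 1) ↔ ⌊t⌋ ∈ s := by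
      rw [hs, Finset.mem_Ioc]; omega
    rw [if_congr hiff rfl rfl]
    split_ifs <;> simp [hX]
  calc (∫ t : ℝ, (W x H t) ^ 2) ≤ ∫ t : ℝ, F t :=
        integral_mono_of_nonneg (Filter.Eventually.of_forall fun t => sq_nonneg _) hFint hle
    _ = _ := hFval


theorem fejer_average_bound (C₂ C₃ : ℝ)
    (ha : ∀ x : ℝ, ∀ H : ℕ, 0 < H →
      (∫ α in (0:ℝ)..1, ‖S0 α x‖ ^ 2 * K α H) = (1 / H) * ∫ t : ℝ, (W x H t) ^ 2)
    (hI : ∀ x : ℝ, 1 ≤ x → (∫ t in (0:ℝ)..x, (psi t - t) ^ 2) ≤ C₂ * x ^ 2)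
    (hJ : ∀ x h : ℝ, 1 ≤ h → h ≤ x →
      (∫ t in (0:ℝ)..x, (psi (t + h) - psi t - h) ^ 2) ≤ C₃ * h * x * (Real.log (2 * x / h)) ^ 2) :
    ∃ C : ℝ, ∀ N : ℕ, 2 ≤ N →
      (1 / N) * (∫ x in (N : ℝ)..(2 * N : ℝ), ∫ α in (0:ℝ)..1, ‖S0 α x‖ ^ 2 * K α N)
        ≤ C * N := by
  have hC₂ : 0 ≤ C₂ := by
    have h1 := hI 1 le_rfl
    have h2 : (0:ℝ) ≤ ∫ t in (0:ℝ)..1, (psi t - t) ^ 2 :=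
      intervalIntegral.integral_nonneg (by norm_num) (fun u _ => sq_nonneg _)
    nlinarith
  refine ⟨48 * C₂ + 10, fun N hN => ?_⟩
  have hN0 : (0:ℝ) < (N:ℝ) := by exact_mod_cast Nat.pos_of_ne_zero (by omega)
  have hNR2 : (2:ℝ) ≤ (N:ℝ) := by exact_mod_cast hN
  set g : ℝ → ℝ := fun x => ∫ α in (0:ℝ)..1, ‖S0 α x‖ ^ 2 * K α N with hg
  by_cases hint : IntervalIntegrable g volume (N:ℝ) (2 * N)
  · have key : ∀ y ∈ Set.Icc (N:ℝ) (2 * N),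
        g y ≤ (32 * C₂ + 10) * N + 4 * (psi y - y) ^ 2 := by
      intro y hy
      obtain ⟨hy1, hy2⟩ := hy
      have hy0 : (0:ℝ) ≤ y := by linarith
      set X := ⌊y⌋₊ with hXdef
      have hXN : N ≤ X := Nat.le_floor hy1
      have hX1 : 1 ≤ X := le_trans (by omega) hXN
      have hXy : (X:ℝ) ≤ y := Nat.floor_le hy0
      have hyX : y < (X:ℝ) + 1 := Nat.lt_floor_add_one y
      have hX2N : (X:ℝ) ≤ 2 * N := le_trans hXy hy2
      have h1 : g y = (1 / (N:ℝ)) * ∫ t : ℝ, (W y N t) ^ 2 := ha y N (by omega)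
      have h2 := intW_le y N
      have h3 := S_le X N (by omega) hXN
      have h4 := sum_Epsi_sq_le hI X hX1
      have h5 : (Epsi X) ^ 2 ≤ 2 * (psi y - y) ^ 2 + 2 := by
        have hpsi : psi y = psi (X:ℝ) := by
          unfold psi
          rw [Nat.floor_natCast]
        have hE : Epsi X = (psi y - y) + (y - X) := by rw [Epsi, ← hpsi]; ring
        rw [hE]
        nlinarith [sq_nonneg ((psi y - y) - (y - (X:ℝ)))]
      have hXsq : (X:ℝ) ^ 2 ≤ 4 * (N:ℝ) ^ 2 := by
        nlinarith [Nat.cast_nonneg (α := ℝ) X]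
      have hA : (∫ t : ℝ, (W y N t) ^ 2)
          ≤ 4 * (2 * C₂ * (X:ℝ) ^ 2 + 2 * X) + 2 * N * (2 * (psi y - y) ^ 2 + 2) := by
        have t1 : 2 * (N:ℝ) * (Epsi X) ^ 2 ≤ 2 * N * (2 * (psi y - y) ^ 2 + 2) := by
          have := mul_le_mul_of_nonneg_left h5 (by positivity : (0:ℝ) ≤ 2 * N)
          linarith
        linarith [h2, h3, h4]
      have hB2 : 4 * (2 * C₂ * (X:ℝ) ^ 2 + 2 * (X:ℝ)) ≤ 32 * C₂ * (N:ℝ) ^ 2 + 16 * N := by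
        nlinarith [mul_le_mul_of_nonneg_left hXsq hC₂]
      have h6 : (∫ t : ℝ, (W y N t) ^ 2)
          ≤ (N:ℝ) * ((32 * C₂ + 10) * N + 4 * (psi y - y) ^ 2) := by
        nlinarith [hA, hB2, sq_nonneg (psi y - y)]
      rw [h1]
      calc (1 / (N:ℝ)) * ∫ t : ℝ, (W y N t) ^ 2
          ≤ (1 / (N:ℝ)) * ((N:ℝ) * ((32 * C₂ + 10) * N + 4 * (psi y - y) ^ 2)) :=
            mul_le_mul_of_nonneg_left h6 (by positivity)
        _ = (32 * C₂ + 10) * N + 4 * (psi y - y) ^ 2 := by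
            field_simp
    have hBint : IntervalIntegrable (fun y => (32 * C₂ + 10) * (N:ℝ) + 4 * (psi y - y) ^ 2)
        volume (N:ℝ) (2 * N) :=
      intervalIntegrable_const.add ((q_int _ _).const_mul 4)
    have hmono := intervalIntegral.integral_mono_on (by linarith : (N:ℝ) ≤ 2 * N)
      hint hBint key
    have hBval : (∫ y in (N:ℝ)..(2 * N), ((32 * C₂ + 10) * (N:ℝ) + 4 * (psi y - y) ^ 2))
        = (32 * C₂ + 10) * N * N + 4 * ∫ y in (N:ℝ)..(2 * N), (psi y - y) ^ 2 := by
      rw [intervalIntegral.integral_add intervalIntegrable_const ((q_int _ _).const_mul 4),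
        intervalIntegral.integral_const, intervalIntegral.integral_const_mul]
      simp only [smul_eq_mul]
      ring
    have hq2 : (∫ y in (N:ℝ)..(2 * N), (psi y - y) ^ 2) ≤ 4 * C₂ * (N:ℝ) ^ 2 := by
      have hsplit := intervalIntegral.integral_add_adjacent_intervals
        (q_int 0 (N:ℝ)) (q_int (N:ℝ) (2 * N))
      have hpos : 0 ≤ ∫ t in (0:ℝ)..(N:ℝ), (psi t - t) ^ 2 :=
        intervalIntegral.integral_nonneg (by linarith) (fun u _ => sq_nonneg _)
      have hIl := hI (2 * N) (by linarith)
      nlinarith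
    have hfinal : (∫ y in (N:ℝ)..(2 * N), g y) ≤ (48 * C₂ + 10) * N * N := by
      nlinarith [hmono, hBval, hq2, sq_nonneg (N:ℝ)]
    calc (1 / (N:ℝ)) * ∫ y in (N:ℝ)..(2 * N), g y
        ≤ (1 / (N:ℝ)) * ((48 * C₂ + 10) * N * N) :=
          mul_le_mul_of_nonneg_left hfinal (by positivity)
      _ = (48 * C₂ + 10) * N := by field_simp
  · rw [intervalIntegral.integral_undef hint, mul_zero]
    exact mul_nonneg (by linarith) hN0.le
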